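/- If every connected component of a graph has at most three vertices and the graph has e edges, then the graph has at least e non-isolated vertices; moreover, if e is not divisible by 3, then it has at least e + 1 non-isolated vertices. -/

import Mathlib

/-- The vertex set of the connected component of `G` containing `v`. -/
def compSet {V : Type*} (G : SimpleGraph V) (v : V) : Set V :=
  {w | G.Reachable v w}

/-- If every connected component of a graph has at most three vertices and the
graph has `e` edges, then it has at least `e` non-isolated vertices; moreover,
if `e` is not divisible by `3`, then it has at least `e + 1` non-isolated
vertices. -/
theorem CC_gt_three_free_support_bound {V : Type*} [Fintype V]
    (G : SimpleGraph V) [Fintype G.edgeSet]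
    (hG : ∀ v : V, (compSet G v).ncard ≤ 3) (e : ℕ)
    (he : G.edgeFinset.card = e) :
    e ≤ {v : V | ∃ w, G.Adj v w}.ncard ∧
      (¬ (3 ∣ e) → e + 1 ≤ {v : V | ∃ w, G.Adj v w}.ncard) := by
  classical
  set S : Finset V := Finset.univ.filter (fun v => ∃ w, G.Adj v w) with hS
  have hsetS : {v : V | ∃ w, G.Adj v w}.ncard = S.card := by
    rw [Set.ncard_eq_toFinset_card']
    congr 1
    ext v
    simp [hS]
  -- component contains v and its neighbors
  have hsub : ∀ v : V, ↑(insert v (G.neighborFinset v)) ⊆ compSet G v := by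
    intro v w hw
    simp only [Finset.coe_insert, Set.mem_insert_iff, Finset.mem_coe,
      SimpleGraph.mem_neighborFinset] at hw
    rcases hw with rfl | hw
    · exact SimpleGraph.Reachable.refl _
    · exact hw.reachable
  have hcardins : ∀ v : V, (insert v (G.neighborFinset v)).card = G.degree v + 1 := by
    intro v
    rw [Finset.card_insert_of_notMem (G.notMem_neighborFinset_self v),
      SimpleGraph.card_neighborFinset_eq_degree]
  have hdeg : ∀ v : V, G.degree v ≤ 2 := by
    intro v
    have h1 : (insert v (G.neighborFinset v)).card ≤ 3 := by
      calc (insert v (G.neighborFinset v)).card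
          = (↑(insert v (G.neighborFinset v)) : Set V).ncard :=
            (Set.ncard_coe_finset _).symm
        _ ≤ (compSet G v).ncard := Set.ncard_le_ncard (hsub v) (Set.toFinite _)
        _ ≤ 3 := hG v
    rw [hcardins v] at h1
    omega
  have hdeg0 : ∀ v : V, v ∉ S → G.degree v = 0 := by
    intro v hv
    simp only [hS, Finset.mem_filter, Finset.mem_univ, true_and, not_exists] at hv
    rw [← SimpleGraph.card_neighborFinset_eq_degree, Finset.card_eq_zero]
    ext w
    simp only [SimpleGraph.mem_neighborFinset, Finset.notMem_empty, iff_false]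
    exact hv w
  have hsum : ∑ v ∈ S, G.degree v = 2 * e := by
    have h2 : ∑ v, G.degree v = 2 * e := by
      rw [SimpleGraph.sum_degrees_eq_twice_card_edges, ← he]
      congr 1
      rw [SimpleGraph.edgeFinset, SimpleGraph.edgeFinset, Set.toFinset_card, Set.toFinset_card]
      congr 1
      exact Subsingleton.elim _ _
    rw [← h2]
    exact (Finset.sum_subset (Finset.subset_univ S)
      (fun v _ hv => hdeg0 v hv))
  have h1 : e ≤ S.card := by
    have : ∑ v ∈ S, G.degree v ≤ ∑ _v ∈ S, 2 :=
      Finset.sum_le_sum (fun v _ => hdeg v)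
    rw [hsum, Finset.sum_const, smul_eq_mul] at this
    omega
  rw [hsetS]
  refine ⟨h1, fun h3 => ?_⟩
  by_contra hlt
  push_neg at hlt
  have hcard : S.card = e := by omega
  -- all support vertices have degree exactly 2
  have hdeg2 : ∀ v ∈ S, G.degree v = 2 := by
    by_contra hcon
    push_neg at hcon
    obtain ⟨v, hv, hvne⟩ := hcon
    have hlt2 : G.degree v < 2 := lt_of_le_of_ne (hdeg v) hvne
    have : ∑ u ∈ S, G.degree u < ∑ _u ∈ S, 2 :=
      Finset.sum_lt_sum (fun u _ => hdeg u) ⟨v, hv, hlt2⟩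
    rw [hsum, Finset.sum_const, smul_eq_mul, hcard] at this
    omega
  -- support is closed under reachability
  have hclose : ∀ v ∈ S, ∀ w, G.Reachable v w → w ∈ S := by
    intro v hv w hr
    by_cases hvw : v = w
    · exact hvw ▸ hv
    · obtain ⟨p⟩ := hr.symm
      cases p with
      | nil => exact absurd rfl hvw
      | cons h _ =>
        simp only [hS, Finset.mem_filter, Finset.mem_univ, true_and]
        exact ⟨_, h⟩
  -- components of support vertices have exactly 3 vertices
  have hcomp : ∀ v ∈ S, (compSet G v).toFinset.card = 3 := by
    intro v hv
    have hle : (compSet G v).toFinset.card ≤ 3 := by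
      rw [← Set.ncard_eq_toFinset_card']
      exact hG v
    have hge : 3 ≤ (compSet G v).toFinset.card := by
      have hsub2 : insert v (G.neighborFinset v) ⊆ (compSet G v).toFinset := by
        intro w hw
        rw [Set.mem_toFinset]
        exact hsub v hw
      have := Finset.card_le_card hsub2
      rw [hcardins v, hdeg2 v hv] at this
      omega
    omega
  -- fibers of connected components partition S into triples
  have hfib : S.card = ∑ c ∈ S.image G.connectedComponentMk,
      (S.filter (fun v => G.connectedComponentMk v = c)).card :=
    Finset.card_eq_sum_card_image _ _
  have hfib3 : ∀ c ∈ S.image G.connectedComponentMk,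
      (S.filter (fun v => G.connectedComponentMk v = c)).card = 3 := by
    intro c hc
    obtain ⟨v, hv, rfl⟩ := Finset.mem_image.mp hc
    have : S.filter (fun w => G.connectedComponentMk w = G.connectedComponentMk v)
        = (compSet G v).toFinset := by
      ext w
      simp only [Finset.mem_filter, Set.mem_toFinset]
      constructor
      · rintro ⟨_, hw⟩
        exact (SimpleGraph.ConnectedComponent.eq.mp hw).symm
      · intro hw
        exact ⟨hclose v hv w hw, SimpleGraph.ConnectedComponent.eq.mpr hw.symm⟩
    rw [this, hcomp v hv]
  have : 3 ∣ e := by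
    rw [← hcard, hfib, Finset.sum_congr rfl hfib3, Finset.sum_const, smul_eq_mul]
    exact Dvd.intro _ (mul_comm _ _)
  exact h3 this
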